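/- Validity of the dynamic-programming single-level reformulation of the CPP: let a CPP be given, together with a finite directed multigraph (finite vertex type V with distinguished p, q; finite arc type A with maps u, w : A → V) and item sets I : A → Finset ι, and for a feasible toll t let F(a;t) = Σ_{i∈I a}(v i − t i). Assume: (i) the multigraph is acyclic; (ii) every vertex admits an arc path to q; (iii) for every feasible toll t, the maximum of Σ_k F(aₖ;t) over all p–q paths equals max_{S∈𝒳} Σ_{i∈S}(v i − t i). Then the optimistic CPP value equals the supremum of Σ_{i∈S} t i over all triples (t, S, y) where t is a feasible toll, S ∈ 𝒳, and y : V → ℝ satisfies y q = 0, y (u a) ≥ F(a;t) + y (w a) for every a ∈ A, and Σ_{i∈S}(v i − t i) = y p. -/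

import Mathlib

open Finset

theorem chain'_nodup_of_acyclic {V A : Type*} {u w : A → V}
    (hacyc : ¬ ∃ l : List A, ∃ h : l ≠ [],
      l.Chain' (fun a b => w a = u b) ∧ w (l.getLast h) = u (l.head h))
    (l : List A) (hc : l.Chain' (fun a b => w a = u b)) : l.Nodup := by
  by_contra hnd
  rw [List.Nodup, List.pairwise_iff_getElem] at hnd
  push_neg at hnd
  obtain ⟨i, j, hi, hj, hij, heq⟩ := hnd
  set m : List A := (l.drop i).take (j - i) with hm
  have hml : m.length = j - i := by
    simp [hm]; omega
  have hmne : m ≠ [] := by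
    apply List.ne_nil_of_length_pos; omega
  have hmc : m.Chain' (fun a b => w a = u b) :=
    hc.infix ((List.take_prefix _ _).isInfix.trans (List.drop_suffix _ _).isInfix)
  have hhead : m.head hmne = l[i] := by
    rw [List.head_eq_getElem]
    simp [hm, List.getElem_take, List.getElem_drop]
  have hlast : m.getLast hmne = l[j-1]'(by omega) := by
    rw [List.getLast_eq_getElem]
    have : m[m.length - 1]'(by omega) = l[i + (m.length - 1)]'(by omega) := by
      simp [hm, List.getElem_take, List.getElem_drop]
    rw [this]
    congr 1; omega
  have hconn : w (l[j-1]'(by omega)) = u (l[j]'hj) := by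
    have := List.isChain_iff_getElem.mp hc (j-1) (by omega)
    simpa [List.get_eq_getElem, show j - 1 + 1 = j by omega] using this
  exact hacyc ⟨m, hmne, hmc, by rw [hlast, hhead, hconn, ← heq]⟩

theorem chain'_sum_le {V A : Type*} {u w : A → V} (F : A → ℝ) (y : V → ℝ)
    (hcon : ∀ a, F a + y (w a) ≤ y (u a)) :
    ∀ l : List A, ∀ h : l ≠ [], l.Chain' (fun a b => w a = u b) →
      (l.map F).sum + y (w (l.getLast h)) ≤ y (u (l.head h)) := by
  intro l
  induction l with
  | nil => simp
  | cons a l ih =>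
    intro _ hc
    cases l with
    | nil => simpa using hcon a
    | cons b l' =>
      rw [List.Chain', List.isChain_cons_cons] at hc
      have h2 := ih (by simp) hc.2
      have h1 := hcon a
      rw [hc.1] at h1
      simp only [List.map_cons, List.sum_cons, List.head_cons,
        List.getLast_cons (by simp : (b :: l') ≠ [])] at *
      linarith

/-- A `p`–`q` path in a directed multigraph with arcs `A`, source map `u` and target
map `w`: a nonempty list of arcs with matching consecutive endpoints, starting at `p`
and ending at `q`. -/
def IsArcPath {V A : Type*} (u w : A → V) (p q : V) (l : List A) : Prop :=
  ∃ h : l ≠ [], l.Chain' (fun a b => w a = u b) ∧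
    u (l.head h) = p ∧ w (l.getLast h) = q

/-- Validity of the dynamic-programming single-level reformulation of
the CPP: if the DP multigraph is acyclic, every vertex reaches `q`, and for every
feasible toll the maximum `p`–`q` path length (arc lengths `F(a;t) = ∑_{i ∈ I a} (v i - t i)`)
equals the follower's optimal value, then the optimistic CPP value equals the supremum of
the leader revenues over the single-level reformulation's feasible triples `(t, S, y)`. -/
theorem cpp_dp_single_level_reformulation {ι V A : Type*}
    [Fintype ι] [DecidableEq ι] [Fintype V] [Fintype A]
    (I₁ I₂ : Finset ι) (hpart : I₁ ∪ I₂ = Finset.univ) (hdisj : Disjoint I₁ I₂)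
    (v : ι → ℝ) (𝒳 : Finset (Finset ι)) (h𝒳 : 𝒳.Nonempty)
    (p q : V) (u w : A → V) (I : A → Finset ι)
    (hacyc : ¬ ∃ l : List A, ∃ h : l ≠ [],
      l.Chain' (fun a b => w a = u b) ∧ w (l.getLast h) = u (l.head h))
    (hreach : ∀ x : V, x = q ∨ ∃ l : List A, IsArcPath u w x q l)
    (hdp : ∀ t : ι → ℝ, (∀ i ∈ I₁, 0 ≤ t i) → (∀ i ∈ I₂, t i = 0) →
      IsGreatest {r : ℝ | ∃ l : List A, IsArcPath u w p q l ∧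
          r = (l.map (fun a => ∑ i ∈ I a, (v i - t i))).sum}
        (𝒳.sup' h𝒳 (fun S => ∑ i ∈ S, (v i - t i)))) :
    sSup {r : ℝ | ∃ t : ι → ℝ, (∀ i ∈ I₁, 0 ≤ t i) ∧ (∀ i ∈ I₂, t i = 0) ∧
      ∃ S ∈ 𝒳, (∀ S' ∈ 𝒳, ∑ i ∈ S', (v i - t i) ≤ ∑ i ∈ S, (v i - t i)) ∧
        r = ∑ i ∈ S, t i} =
    sSup {r : ℝ | ∃ t : ι → ℝ, (∀ i ∈ I₁, 0 ≤ t i) ∧ (∀ i ∈ I₂, t i = 0) ∧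
      ∃ S ∈ 𝒳, ∃ y : V → ℝ, y q = 0 ∧
        (∀ a : A, y (u a) ≥ (∑ i ∈ I a, (v i - t i)) + y (w a)) ∧
        (∑ i ∈ S, (v i - t i) = y p) ∧
        r = ∑ i ∈ S, t i} := by
  classical
  congr 1
  ext r
  simp only [Set.mem_setOf_eq]
  constructor
  · rintro ⟨t, ht1, ht2, S, hS, hopt, rfl⟩
    refine ⟨t, ht1, ht2, S, hS, ?_⟩
    set F : A → ℝ := fun a => ∑ i ∈ I a, (v i - t i) with hF
    set P : V → Set ℝ :=
      fun x => {r : ℝ | ∃ l : List A, IsArcPath u w x q l ∧ r = (l.map F).sum} with hP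
    set y : V → ℝ := fun x => sSup (P x) with hy
    have hbdd : ∀ x, BddAbove (P x) := by
      intro x
      refine ⟨∑ a : A, max (F a) 0, ?_⟩
      rintro r ⟨l, ⟨hne, hc, -, -⟩, rfl⟩
      have hnd := chain'_nodup_of_acyclic hacyc l hc
      calc (l.map F).sum = ∑ a ∈ l.toFinset, F a := (List.sum_toFinset _ hnd).symm
        _ ≤ ∑ a ∈ l.toFinset, max (F a) 0 := sum_le_sum (fun a _ => le_max_left _ _)
        _ ≤ ∑ a : A, max (F a) 0 :=
            sum_le_sum_of_subset_of_nonneg (subset_univ _) (fun a _ _ => le_max_right _ _)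
    have hyq : y q = 0 := by
      have hPq : P q = ∅ := by
        ext s
        simp only [Set.mem_empty_iff_false, iff_false, hP, Set.mem_setOf_eq]
        rintro ⟨l, ⟨hne, hc, hh, hl⟩, rfl⟩
        exact hacyc ⟨l, hne, hc, by rw [hl, hh]⟩
      rw [hy]; simp only; rw [hPq, Real.sSup_empty]
    have hcon : ∀ a : A, y (u a) ≥ F a + y (w a) := by
      intro a
      rcases hreach (w a) with hq | ⟨l, hl⟩
      · have h0 : y (w a) = 0 := by rw [hq, hyq]
        have hmem : F a ∈ P (u a) :=
          ⟨[a], ⟨by simp, List.isChain_singleton a, by simp, by simpa using hq⟩, by simp⟩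
        have := le_csSup (hbdd (u a)) hmem
        rw [ge_iff_le, h0, add_zero]
        exact this
      · have hne' : (P (w a)).Nonempty := ⟨_, l, hl, rfl⟩
        have hle : y (w a) ≤ y (u a) - F a := by
          apply csSup_le hne'
          rintro s ⟨m, ⟨hmne, hmc, hmh, hml⟩, rfl⟩
          have hmem : F a + (m.map F).sum ∈ P (u a) := by
            refine ⟨a :: m, ⟨by simp, ?_, by simp, ?_⟩, by simp⟩
            · rw [List.Chain', List.isChain_cons]
              refine ⟨fun b hb => ?_, hmc⟩
              rw [List.head?_eq_head hmne] at hb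
              rw [← hmh, Option.mem_some_iff.mp hb]
            · rw [List.getLast_cons hmne]; exact hml
          have := le_csSup (hbdd (u a)) hmem
          linarith
        rw [ge_iff_le]
        linarith
    refine ⟨y, hyq, hcon, ?_, rfl⟩
    have hg := hdp t ht1 ht2
    have hsup : 𝒳.sup' h𝒳 (fun S' => ∑ i ∈ S', (v i - t i)) = ∑ i ∈ S, (v i - t i) :=
      le_antisymm (Finset.sup'_le _ _ hopt) (Finset.le_sup' (fun S'' => ∑ i ∈ S'', (v i - t i)) hS)
    rw [← hsup]
    exact (hg.csSup_eq).symm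
  · rintro ⟨t, ht1, ht2, S, hS, y, hyq, hcon, hyp, rfl⟩
    refine ⟨t, ht1, ht2, S, hS, ?_, rfl⟩
    intro S' hS'
    have hg := hdp t ht1 ht2
    obtain ⟨l, ⟨hne, hc, hh, hl⟩, hsum⟩ := hg.1
    have htel := chain'_sum_le (fun a => ∑ i ∈ I a, (v i - t i)) y
      (fun a => by linarith [hcon a]) l hne hc
    rw [hh, hl, hyq] at htel
    have h1 : ∑ i ∈ S', (v i - t i) ≤ 𝒳.sup' h𝒳 (fun S'' => ∑ i ∈ S'', (v i - t i)) :=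
      Finset.le_sup' (fun S'' => ∑ i ∈ S'', (v i - t i)) hS'
    linarith
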